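/- Let (u_1, …, u_m) and (w_1, …, w_m) be non-increasing finite sequences of nonnegative reals with w_j ≤ u_j for every j. Let T and X be subsets of {1, …, m} of equal cardinality, and suppose there exists a bijection f : T → X such that f(t) ≤ t for every t ∈ T. Let (u'_j) be the sequence obtained from (u_j) by deleting the entries at positions in T, and let (w'_j) be the sequence obtained from (w_j) by deleting the entries at positions in X, both reindexed in non-increasing order. Then w'_j ≤ u'_j for every j ∈ {1, …, m − |T|}. -/
import Mathlib


/-- If for every `a`, `B` has at most as many elements `≤ a` as `A` does, then the
`j`-th smallest element of `A` is at most the `j`-th smallest element of `B`. -/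
lemma aux_orderIso_le {m n : ℕ} (A B : Finset (Fin m)) (hA : A.card = n) (hB : B.card = n)
    (hcount : ∀ a : Fin m, (B ∩ Finset.Iic a).card ≤ (A ∩ Finset.Iic a).card)
    (j : Fin n) : (A.orderIsoOfFin hA j : Fin m) ≤ (B.orderIsoOfFin hB j : Fin m) := by
  set a := (B.orderIsoOfFin hB j : Fin m) with ha
  have hBge : (j : ℕ) + 1 ≤ (B ∩ Finset.Iic a).card := by
    have hsub : (Finset.Iic j).image (fun i => (B.orderIsoOfFin hB i : Fin m))
        ⊆ B ∩ Finset.Iic a := by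
      intro b hb
      simp only [Finset.mem_image, Finset.mem_Iic] at hb
      obtain ⟨i, hi, rfl⟩ := hb
      refine Finset.mem_inter.2 ⟨(B.orderIsoOfFin hB i).2, Finset.mem_Iic.2 ?_⟩
      exact_mod_cast (B.orderIsoOfFin hB).monotone hi
    have hinj : Function.Injective (fun i => (B.orderIsoOfFin hB i : Fin m)) := by
      intro i₁ i₂ h
      exact (B.orderIsoOfFin hB).injective (Subtype.ext h)
    calc (j : ℕ) + 1 = (Finset.Iic j).card := by simp
      _ = ((Finset.Iic j).image (fun i => (B.orderIsoOfFin hB i : Fin m))).card :=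
          (Finset.card_image_of_injective _ hinj).symm
      _ ≤ _ := Finset.card_le_card hsub
  by_contra hlt
  push_neg at hlt
  have hsub : A ∩ Finset.Iic a ⊆ (Finset.Iio j).image (fun i => (A.orderIsoOfFin hA i : Fin m)) := by
    intro b hb
    obtain ⟨hbA, hba⟩ := Finset.mem_inter.1 hb
    set i := (A.orderIsoOfFin hA).symm ⟨b, hbA⟩ with hi
    have hbi : (A.orderIsoOfFin hA i : Fin m) = b := by simp [hi]
    have hij : i < j := by
      by_contra hij
      push_neg at hij
      have h1 : (A.orderIsoOfFin hA j : Fin m) ≤ (A.orderIsoOfFin hA i : Fin m) := by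
        exact_mod_cast (A.orderIsoOfFin hA).monotone hij
      rw [hbi] at h1
      have := h1.trans ((Finset.mem_Iic.1 hba))
      exact absurd this (not_le.2 hlt)
    exact Finset.mem_image.2 ⟨i, Finset.mem_Iio.2 hij, hbi⟩
  have hcA : (A ∩ Finset.Iic a).card ≤ (j : ℕ) := by
    calc (A ∩ Finset.Iic a).card ≤ ((Finset.Iio j).image _).card := Finset.card_le_card hsub
      _ ≤ (Finset.Iio j).card := Finset.card_image_le
      _ = (j : ℕ) := by simp
  have := hcount a
  omega

/-- Removing a dominance bundle preserves the witness property.  Let `(u j)` and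
`(w j)` be non-increasing sequences of nonnegative reals with `w j ≤ u j` for all
`j`, let `T` and `X` be sets of positions with a bijection `f : T → X` satisfying
`f t ≤ t` for every `t ∈ T`.  Deleting the entries of `u` at positions in `T` and
the entries of `w` at positions in `X` (both reindexed in non-increasing order,
i.e. enumerating the complements in increasing position order) preserves the
pointwise domination. -/
theorem remove_dominance_bundle_preserves_witness {m : ℕ} (u w : Fin m → ℝ)
    (hu : ∀ j k : Fin m, j ≤ k → u k ≤ u j)
    (hw : ∀ j k : Fin m, j ≤ k → w k ≤ w j)
    (hu0 : ∀ j, 0 ≤ u j) (hw0 : ∀ j, 0 ≤ w j)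
    (hdom : ∀ j, w j ≤ u j)
    (T X : Finset (Fin m)) (hcard : X.card = T.card)
    (f : {x : Fin m // x ∈ T} → {x : Fin m // x ∈ X})
    (hf : Function.Bijective f)
    (hfle : ∀ t : {x : Fin m // x ∈ T}, ((f t : Fin m) : ℕ) ≤ ((t : Fin m) : ℕ)) :
    ∀ j : Fin (m - T.card),
      w ((Xᶜ.orderIsoOfFin
            (by simp [Finset.card_compl, hcard])) j) ≤
        u ((Tᶜ.orderIsoOfFin
            (by simp [Finset.card_compl])) j) := by
  intro j
  have hcount : ∀ a : Fin m, (Xᶜ ∩ Finset.Iic a).card ≤ (Tᶜ ∩ Finset.Iic a).card := by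
    intro a
    have hTX : (T ∩ Finset.Iic a).card ≤ (X ∩ Finset.Iic a).card := by
      apply Finset.card_le_card_of_injOn
        (fun b => if h : b ∈ T then (f ⟨b, h⟩ : Fin m) else b)
      · intro b hb
        obtain ⟨hbT, hba⟩ := Finset.mem_inter.1 hb
        simp only [dif_pos hbT]
        refine Finset.mem_inter.2 ⟨(f ⟨b, hbT⟩).2, Finset.mem_Iic.2 ?_⟩
        have := hfle ⟨b, hbT⟩
        have hba' := Finset.mem_Iic.1 hba
        exact Fin.le_def.2 (le_trans this (Fin.le_def.1 hba'))
      · intro b₁ hb₁ b₂ hb₂ h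
        obtain ⟨hb₁T, _⟩ := Finset.mem_inter.1 hb₁
        obtain ⟨hb₂T, _⟩ := Finset.mem_inter.1 hb₂
        simp only [dif_pos hb₁T, dif_pos hb₂T] at h
        have := hf.injective (Subtype.ext h)
        exact congrArg Subtype.val this
    have h1 : (T ∩ Finset.Iic a).card + (Tᶜ ∩ Finset.Iic a).card = (Finset.Iic a).card := by
      rw [Finset.inter_comm T, Finset.inter_comm Tᶜ]
      exact Finset.card_inter_add_card_sdiff (Finset.Iic a) T ▸ by
        rw [Finset.sdiff_eq_inter_compl]
    have h2 : (X ∩ Finset.Iic a).card + (Xᶜ ∩ Finset.Iic a).card = (Finset.Iic a).card := by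
      rw [Finset.inter_comm X, Finset.inter_comm Xᶜ]
      exact Finset.card_inter_add_card_sdiff (Finset.Iic a) X ▸ by
        rw [Finset.sdiff_eq_inter_compl]
    omega
  have hkey := aux_orderIso_le Tᶜ Xᶜ
    (by simp [Finset.card_compl]) (by simp [Finset.card_compl, hcard]) hcount j
  calc w _ ≤ w _ := hw _ _ hkey
    _ ≤ u _ := hdom _
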